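/- Let n ≤ m. There exists a JL-coloring φ of K_{n,m} with exactly (n-1)(m-1)+1 rainbow spanning trees, and every JL-coloring φ of K_{n,m} satisfies |R(K_{n,m},φ)| ≥ (n-1)(m-1)+1. -/

import Mathlib

/-- `T` is the edge set of a spanning tree of `G`: its edges lie in `G`, and the graph
formed by these edges is connected (hence spanning) and acyclic. -/
def IsSpanningTreeEdges {V : Type*} (G : SimpleGraph V) (T : Finset (Sym2 V)) : Prop :=
  ↑T ⊆ G.edgeSet ∧ (SimpleGraph.fromEdgeSet (↑T : Set (Sym2 V))).Connected ∧
    (SimpleGraph.fromEdgeSet (↑T : Set (Sym2 V))).IsAcyclic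

/-- An edge set is rainbow under a coloring `φ` if all its edges receive distinct colors. -/
def IsRainbow {V : Type*} {k : ℕ} (φ : Sym2 V → Fin k) (T : Finset (Sym2 V)) : Prop :=
  Set.InjOn φ ↑T

/-- `G` has a rainbow cycle under `φ`: a cycle whose edges receive pairwise distinct colors. -/
def HasRainbowCycle {V : Type*} {k : ℕ} (G : SimpleGraph V) (φ : Sym2 V → Fin k) : Prop :=
  ∃ (v : V) (c : G.Walk v v), c.IsCycle ∧ Set.InjOn φ {e | e ∈ c.edges}

/-- `φ` is a JL-coloring of `G`: every one of the `k` colors appears on some edge of `G`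
(surjectivity onto the colors) and there is no rainbow cycle. -/
def IsJLColoring {V : Type*} {k : ℕ} (G : SimpleGraph V) (φ : Sym2 V → Fin k) : Prop :=
  (∀ c : Fin k, ∃ e ∈ G.edgeSet, φ e = c) ∧ ¬ HasRainbowCycle G φ

/-- The number of rainbow spanning trees of `G` under the edge coloring `φ`. -/
noncomputable def numRST {V : Type*} {k : ℕ} (G : SimpleGraph V) (φ : Sym2 V → Fin k) : ℕ :=
  Nat.card {T : Finset (Sym2 V) // IsSpanningTreeEdges G T ∧ IsRainbow φ T}

open SimpleGraph Finset Walk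


/-- In a cycle, every support vertex has two distinct incident cycle edges. -/
lemma cycle_two_edges [DecidableEq V] {G : SimpleGraph V} {v u : V} {c : G.Walk v v} (hc : c.IsCycle)
    (hu : u ∈ c.support) :
    ∃ x y : V, x ≠ y ∧ s(u, x) ∈ c.edges ∧ s(u, y) ∈ c.edges := by
  have hc' : (c.rotate u hu).IsCycle := hc.rotate hu
  have hperm := c.rotate_edges u hu
  obtain ⟨x, hadj, q, hq⟩ := (Walk.not_nil_iff).mp hc'.not_nil
  have hlen : 3 ≤ (c.rotate u hu).length := hc'.three_le_length
  have hqnil : ¬ q.Nil := by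
    rw [Walk.nil_iff_length_eq]
    have : (c.rotate u hu).length = q.length + 1 := by rw [hq]; simp
    omega
  have hqrnil : ¬ q.reverse.Nil := by
    rwa [Walk.nil_iff_length_eq, Walk.length_reverse, ← Walk.nil_iff_length_eq]
  obtain ⟨y, hadj2, q2, hq2⟩ := (Walk.not_nil_iff).mp hqrnil
  have hmem1 : s(u, x) ∈ (c.rotate u hu).edges := by rw [hq]; simp
  have hymem : s(u, y) ∈ q.edges := by
    have : s(u, y) ∈ q.reverse.edges := by rw [hq2]; simp
    rwa [Walk.edges_reverse, List.mem_reverse] at this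
  have hmem2 : s(u, y) ∈ (c.rotate u hu).edges := by
    rw [hq, Walk.edges_cons]
    exact List.mem_cons_of_mem _ hymem
  have hnodup : (c.rotate u hu).edges.Nodup := hc'.edges_nodup
  refine ⟨x, y, ?_, hperm.mem_iff.mp hmem1, hperm.mem_iff.mp hmem2⟩
  rintro rfl
  rw [hq, Walk.edges_cons] at hnodup
  exact (List.nodup_cons.mp hnodup).1 hymem


lemma connected_of_acyclic_card [Fintype V] [DecidableEq V]
    (T : Finset (Sym2 V)) (hdiag : ∀ e ∈ T, ¬ e.IsDiag)
    (hac : (SimpleGraph.fromEdgeSet (↑T : Set (Sym2 V))).IsAcyclic)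
    (hcard : T.card + 1 = Fintype.card V) :
    (SimpleGraph.fromEdgeSet (↑T : Set (Sym2 V))).Connected := by
  set H := SimpleGraph.fromEdgeSet (↑T : Set (Sym2 V)) with hH
  haveI hne : Nonempty V := Fintype.card_pos_iff.mp (by omega)
  let root : V → V := fun v => Quot.out (H.connectedComponentMk v)
  have hmkroot : ∀ v, H.connectedComponentMk (root v) = H.connectedComponentMk v :=
    fun v => Quot.out_eq _
  have hroot_reach : ∀ v, H.Reachable v (root v) :=
    fun v => (ConnectedComponent.exact (hmkroot v)).symm
  have hroot_eq_of_reach : ∀ u v, H.Reachable u v → root u = root v := by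
    intro u v h
    show Quot.out _ = Quot.out _
    rw [ConnectedComponent.sound h]
  have hroot_idem : ∀ v, root (root v) = root v := by
    intro v
    show Quot.out _ = Quot.out _
    rw [hmkroot v]
  let pth : ∀ v, H.Path v (root v) := fun v => (hroot_reach v).some.toPath
  have puniq : ∀ (v) (q : H.Path v (root v)), q = pth v := fun v q => hac.path_unique q (pth v)
  let fe : V → Sym2 V := fun v => s(v, ((pth v : H.Walk v (root v))).getVert 1)
  have hne_root : ∀ v, 0 < ((pth v : H.Walk v (root v))).length → v ≠ root v := by
    intro v hl hveq
    have hq0 : ((Walk.nil : H.Walk v v).copy rfl hveq).IsPath := by simp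
    have := puniq v ⟨_, hq0⟩
    rw [← this] at hl
    simp at hl
  have hsurj : ∀ e ∈ T, ∃ w, w ≠ root w ∧ fe w = e := by
    intro e he
    induction e using Sym2.ind with
    | _ u v₀ =>
      have hadj : H.Adj u v₀ := by
        rw [hH, SimpleGraph.fromEdgeSet_adj]
        refine ⟨he, ?_⟩
        intro h
        exact hdiag _ he (by simp [h])
      set p : H.Walk v₀ (root v₀) := (pth v₀ : H.Walk v₀ (root v₀)) with hp
      by_cases hu : u ∈ p.support
      · set s := p.dropUntil u hu with hs
        have hspath : s.IsPath := (pth v₀).2.dropUntil hu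
        have hvns : v₀ ∉ s.support := by
          intro hvs
          have hvne : v₀ ≠ u := hadj.ne'
          have hvtail : v₀ ∈ s.support.tail := by
            rcases List.mem_cons.mp (s.support_eq_cons ▸ hvs) with h | h
            · exact absurd h hvne
            · exact h
          have hnd : p.support.Nodup := (pth v₀).2.support_nodup
          rw [← p.take_spec hu, Walk.support_append] at hnd
          exact (List.disjoint_of_nodup_append hnd)
            ((p.takeUntil u hu).start_mem_support) hvtail
        have hwpath : (Walk.cons hadj.symm s).IsPath := hspath.cons hvns
        have heq := puniq v₀ ⟨_, hwpath⟩
        have hval : (pth v₀ : H.Walk v₀ (root v₀)) = Walk.cons hadj.symm s := by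
          rw [← heq]
        refine ⟨v₀, ?_, ?_⟩
        · apply hne_root
          rw [hval]
          simp
        · show s(v₀, (pth v₀ : H.Walk v₀ (root v₀)).getVert 1) = s(u, v₀)
          rw [hval]
          simp [Walk.getVert_cons_succ, Walk.getVert_zero, Sym2.eq_swap]
      · have hwpath : (Walk.cons hadj p).IsPath := (pth v₀).2.cons hu
        have hru : root u = root v₀ := hroot_eq_of_reach u v₀ hadj.reachable
        have hwpath' : ((Walk.cons hadj p).copy rfl hru.symm).IsPath := by
          simpa using hwpath
        have heq := puniq u ⟨_, hwpath'⟩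
        have hval : (pth u : H.Walk u (root u)) = (Walk.cons hadj p).copy rfl hru.symm := by
          rw [← heq]
        refine ⟨u, ?_, ?_⟩
        · apply hne_root
          rw [hval]
          simp
        · show s(u, (pth u : H.Walk u (root u)).getVert 1) = s(u, v₀)
          rw [hval]
          simp [Walk.getVert_cons_succ, Walk.getVert_zero]
  -- counting
  by_contra hconn
  rw [SimpleGraph.connected_iff] at hconn
  push_neg at hconn
  have hnp : ¬ H.Preconnected := fun hp => (hconn hp).false hne.some
  rw [SimpleGraph.Preconnected] at hnp
  push_neg at hnp
  obtain ⟨u, v, hnreach⟩ := hnp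
  have hr_ne : root u ≠ root v :=
    fun h => hnreach ((hroot_reach u).trans (h ▸ (hroot_reach v).symm))
  set NR := univ.filter (fun w => w ≠ root w) with hNR
  have h1 : T ⊆ NR.image fe := by
    intro e he
    obtain ⟨w, hw, hfe⟩ := hsurj e he
    exact mem_image.mpr ⟨w, mem_filter.mpr ⟨mem_univ _, hw⟩, hfe⟩
  have h2 : T.card ≤ NR.card := le_trans (card_le_card h1) card_image_le
  have h3 : NR ⊆ (univ.erase (root u)).erase (root v) := by
    intro w hw
    have hwne : w ≠ root w := (mem_filter.mp hw).2
    refine mem_erase.mpr ⟨?_, mem_erase.mpr ⟨?_, mem_univ _⟩⟩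
    · rintro rfl; exact hwne (hroot_idem v).symm
    · rintro rfl; exact hwne (hroot_idem u).symm
  have h4 : ((univ.erase (root u)).erase (root v)).card = Fintype.card V - 2 := by
    rw [card_erase_of_mem (mem_erase.mpr ⟨hr_ne.symm, mem_univ _⟩), card_erase_of_mem (mem_univ _),
      card_univ]
    omega
  have h5 := card_le_card h3
  have h6 : T.card ≤ Fintype.card V - 2 := h2.trans (h5.trans_eq h4)
  have h7 : 1 < Fintype.card V := Fintype.one_lt_card_iff.mpr ⟨_, _, hr_ne⟩
  omega
lemma rainbow_acyclic [DecidableEq V] {k : ℕ} {G : SimpleGraph V} {φ : Sym2 V → Fin k}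
    (hnrc : ¬ HasRainbowCycle G φ) (T : Finset (Sym2 V)) (hsub : ↑T ⊆ G.edgeSet)
    (hrb : IsRainbow φ T) : (SimpleGraph.fromEdgeSet (↑T : Set (Sym2 V))).IsAcyclic := by
  intro v c hc
  have hsub1 : ∀ e ∈ c.edges, e ∈ (↑T : Set (Sym2 V)) := by
    intro e he
    have := c.edges_subset_edgeSet he
    rw [SimpleGraph.edgeSet_fromEdgeSet] at this
    exact this.1
  have hsub2 : ∀ e ∈ c.edges, e ∈ G.edgeSet := fun e he => hsub (hsub1 e he)
  refine hnrc ⟨v, c.transfer G hsub2, hc.transfer _, ?_⟩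
  rw [show {e | e ∈ (c.transfer G hsub2).edges} = {e | e ∈ c.edges} by
    rw [Walk.edges_transfer]]
  exact hrb.mono (fun e he => hsub1 e he)

lemma numRST_eq_prod {V E' : Type*} [Fintype V] [DecidableEq V] [Fintype E'] [DecidableEq E']
    {k : ℕ} (G : SimpleGraph V) (φ : Sym2 V → Fin k) (ι : E' → Sym2 V)
    (hι : Function.Injective ι)
    (hrange : ∀ e, e ∈ G.edgeSet ↔ ∃ p, ι p = e)
    (hk : Fintype.card V = k + 1)
    (hnrc : ¬ HasRainbowCycle G φ) :
    numRST G φ = ∏ c : Fin k, (univ.filter (fun p : E' => φ (ι p) = c)).card := by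
  classical
  have hmemGE : ∀ p : E', ι p ∈ G.edgeSet := fun p => (hrange _).mpr ⟨p, rfl⟩
  let D := ∀ c : Fin k, {p : E' // φ (ι p) = c}
  have hinjc : ∀ f : D, Function.Injective (fun c => ι (f c).1) := by
    intro f c c' h
    have h2 := hι h
    have := (f c).2
    rw [h2, (f c').2] at this
    exact this.symm
  let τ : D → Finset (Sym2 V) := fun f => univ.image (fun c => ι (f c).1)
  have hmemτ : ∀ (f : D) (e : Sym2 V), e ∈ τ f ↔ ∃ c, ι (f c).1 = e := by
    intro f e; simp [τ]
  have hsubτ : ∀ f : D, ↑(τ f) ⊆ G.edgeSet := by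
    rintro f e he
    obtain ⟨c, rfl⟩ := (hmemτ f e).mp he
    exact hmemGE _
  have hdiagτ : ∀ (f : D), ∀ e ∈ τ f, ¬ e.IsDiag := fun f e he =>
    G.not_isDiag_of_mem_edgeSet (hsubτ f he)
  have hcardτ : ∀ f : D, (τ f).card = k := by
    intro f
    rw [card_image_of_injective _ (hinjc f), card_univ, Fintype.card_fin]
  have hrbτ : ∀ f : D, IsRainbow φ (τ f) := by
    intro f e₁ he₁ e₂ he₂ hφ
    obtain ⟨c₁, rfl⟩ := (hmemτ f e₁).mp he₁
    obtain ⟨c₂, rfl⟩ := (hmemτ f e₂).mp he₂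
    rw [(f c₁).2, (f c₂).2] at hφ
    rw [hφ]
  have hacyτ : ∀ f : D, (SimpleGraph.fromEdgeSet (↑(τ f) : Set (Sym2 V))).IsAcyclic :=
    fun f => rainbow_acyclic hnrc _ (hsubτ f) (hrbτ f)
  let τ' : D → {T : Finset (Sym2 V) // IsSpanningTreeEdges G T ∧ IsRainbow φ T} := fun f =>
    ⟨τ f, ⟨hsubτ f,
      connected_of_acyclic_card _ (hdiagτ f) (hacyτ f) (by rw [hcardτ f]; omega),
      hacyτ f⟩, hrbτ f⟩
  have hinjτ : Function.Injective τ' := by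
    intro f g h
    have h' : τ f = τ g := congrArg Subtype.val h
    funext c
    have hfc : ι (f c).1 ∈ τ g := by rw [← h']; exact (hmemτ f _).mpr ⟨c, rfl⟩
    obtain ⟨c', hc'⟩ := (hmemτ g _).mp hfc
    have : (g c').1 = (f c).1 := hι hc'
    have hcc : c' = c := by
      have h2 := (g c').2
      rw [this, (f c).2] at h2
      exact h2.symm
    apply Subtype.ext
    rw [← this, hcc]
  have hsurjτ : Function.Surjective τ' := by
    rintro ⟨T, ⟨hsub, hconn, hacy⟩, hrb⟩
    have htree : (SimpleGraph.fromEdgeSet (↑T : Set (Sym2 V))).IsTree := ⟨hconn, hacy⟩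
    have hdiag : ∀ e ∈ T, ¬ e.IsDiag := fun e he => G.not_isDiag_of_mem_edgeSet (hsub he)
    have hes : (SimpleGraph.fromEdgeSet (↑T : Set (Sym2 V))).edgeSet = ↑T := by
      rw [SimpleGraph.edgeSet_fromEdgeSet]
      ext e
      simp only [Set.mem_diff, Set.mem_setOf_eq, Finset.mem_coe, and_iff_left_iff_imp]
      exact fun he => hdiag e he
    haveI : Fintype (SimpleGraph.fromEdgeSet (↑T : Set (Sym2 V))).edgeSet := by
      rw [hes]; exact FinsetCoe.fintype T
    have hTcard : T.card = k := by
      have h2 := htree.card_edgeFinset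
      have h3 : (SimpleGraph.fromEdgeSet (↑T : Set (Sym2 V))).edgeFinset = T := by
        ext e
        rw [SimpleGraph.mem_edgeFinset, hes, Finset.mem_coe]
      rw [h3] at h2
      omega
    have himg : T.image φ = univ := by
      apply eq_univ_of_card
      rw [card_image_of_injOn hrb, hTcard, Fintype.card_fin]
    have hex : ∀ c : Fin k, ∃ e ∈ T, φ e = c := by
      intro c
      have : c ∈ T.image φ := himg ▸ mem_univ c
      exact mem_image.mp this
    choose eC heC hφC using hex
    choose pC hpC using fun c => (hrange (eC c)).mp (hsub (heC c))
    refine ⟨fun c => ⟨pC c, by rw [hpC]; exact hφC c⟩, ?_⟩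
    apply Subtype.ext
    show τ _ = T
    apply Finset.eq_of_subset_of_card_le
    · intro e he
      obtain ⟨c, rfl⟩ := (hmemτ _ e).mp he
      simp only [hpC]
      exact heC c
    · rw [hcardτ, hTcard]
  have : numRST G φ = Nat.card D := by
    rw [numRST, Nat.card_congr (Equiv.ofBijective τ' ⟨hinjτ, hsurjτ⟩).symm]
  rw [this, Nat.card_pi]
  congr 1
  funext c
  rw [Nat.card_eq_fintype_card, Fintype.card_subtype]


lemma sum_add_one_le_prod_add_card {α : Type*} (s : Finset α) (f : α → ℕ)
    (hf : ∀ i ∈ s, 1 ≤ f i) : (∑ i ∈ s, f i) + 1 ≤ (∏ i ∈ s, f i) + s.card := by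
  classical
  induction s using Finset.induction_on with
  | empty => simp
  | @insert a s' ha ih =>
    have h1 : 1 ≤ f a := hf a (mem_insert_self a s')
    have hP : 1 ≤ ∏ i ∈ s', f i := Finset.one_le_prod' (fun i hi => hf i (mem_insert_of_mem hi))
    have ih' := ih (fun i hi => hf i (mem_insert_of_mem hi))
    rw [Finset.sum_insert ha, Finset.prod_insert ha, card_insert_of_notMem ha]
    have key : f a + (∏ i ∈ s', f i) ≤ f a * (∏ i ∈ s', f i) + 1 := by
      obtain ⟨x, hx⟩ := Nat.exists_eq_add_of_le h1
      obtain ⟨y, hy⟩ := Nat.exists_eq_add_of_le hP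
      rw [hx, hy]
      nlinarith
    omega

variable {n m : ℕ}

def bp (n m : ℕ) : Fin n × Fin m → Sym2 (Fin n ⊕ Fin m) :=
  fun p => s(Sum.inl p.1, Sum.inr p.2)

lemma bp_inj : Function.Injective (bp n m) := by
  rintro ⟨i, j⟩ ⟨i', j'⟩ h
  simp only [bp, Sym2.eq, Sym2.rel_iff', Prod.mk.injEq, Prod.swap_prod_mk] at h
  rcases h with ⟨h1, h2⟩ | ⟨h1, h2⟩
  · simp only [Sum.inl.injEq] at h1
    simp only [Sum.inr.injEq] at h2
    simp [h1, h2]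
  · exact absurd h1 (by simp)

lemma bp_range (e : Sym2 (Fin n ⊕ Fin m)) :
    e ∈ (completeBipartiteGraph (Fin n) (Fin m)).edgeSet ↔ ∃ p, bp n m p = e := by
  induction e using Sym2.ind with
  | _ x y =>
    constructor
    · intro h
      rw [SimpleGraph.mem_edgeSet] at h
      rcases h with ⟨hx, hy⟩ | ⟨hx, hy⟩
      · obtain ⟨i, rfl⟩ := Sum.isLeft_iff.mp hx
        obtain ⟨j, rfl⟩ := Sum.isRight_iff.mp hy
        exact ⟨(i, j), rfl⟩
      · obtain ⟨j, rfl⟩ := Sum.isRight_iff.mp hx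
        obtain ⟨i, rfl⟩ := Sum.isLeft_iff.mp hy
        exact ⟨(i, j), Sym2.eq_swap⟩
    · rintro ⟨⟨i, j⟩, h⟩
      rw [← h]
      simp [bp, SimpleGraph.mem_edgeSet]

def gcode (n m : ℕ) : (Fin n ⊕ Fin m) → (Fin n ⊕ Fin m) → ℕ := fun x y =>
  match x, y with
  | .inl i, .inr j => if i.val = 0 then j.val else if j.val = 0 then m + i.val - 1 else 0
  | .inr j, .inl i => if i.val = 0 then j.val else if j.val = 0 then m + i.val - 1 else 0
  | _, _ => 0

lemma gcode_symm : ∀ x y, gcode n m x y = gcode n m y x := by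
  rintro (i | j) (i' | j') <;> rfl

def ecode (n m : ℕ) : Sym2 (Fin n ⊕ Fin m) → ℕ := Sym2.lift ⟨gcode n m, gcode_symm⟩

lemma ecode_lt (hn : 1 ≤ n) (hm : 1 ≤ m) (e : Sym2 (Fin n ⊕ Fin m)) :
    ecode n m e < n + m - 1 := by
  induction e using Sym2.ind with
  | _ x y =>
    show gcode n m x y < n + m - 1
    rcases x with i | j <;> rcases y with i' | j'
    · simp only [gcode]; omega
    · have h1 := i.isLt
      have h2 := j'.isLt
      simp only [gcode]
      split_ifs <;> omega
    · have h1 := i'.isLt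
      have h2 := j.isLt
      simp only [gcode]
      split_ifs <;> omega
    · simp only [gcode]; omega

lemma ecode_bp (p : Fin n × Fin m) :
    ecode n m (bp n m p) =
      if p.1.val = 0 then p.2.val else if p.2.val = 0 then m + p.1.val - 1 else 0 := rfl

lemma count_classes (hn : 1 ≤ n) (hm : 1 ≤ m) {t : ℕ} (ht : t < n + m - 1) :
    (univ.filter (fun p : Fin n × Fin m =>
      (if p.1.val = 0 then p.2.val else if p.2.val = 0 then (m : ℕ) + p.1.val - 1 else 0) = t)).card
      = if t = 0 then (n - 1) * (m - 1) + 1 else 1 := by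
  rcases Nat.eq_zero_or_pos t with rfl | htpos
  · rw [if_pos rfl]
    have hcong : (univ.filter (fun p : Fin n × Fin m =>
        (if p.1.val = 0 then p.2.val else if p.2.val = 0 then (m : ℕ) + p.1.val - 1 else 0) = 0))
        = univ.filter (fun p : Fin n × Fin m =>
            (¬ p.1.val = 0 ∧ ¬ p.2.val = 0) ∨ (p.1.val = 0 ∧ p.2.val = 0)) := by
      apply filter_congr
      intro p _
      constructor
      · intro h
        split_ifs at h with h1 h2 <;> omega
      · intro h
        split_ifs with h1 h2 <;> omega
    rw [hcong, filter_or, card_union_of_disjoint]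
    · have e1 : (univ.filter (fun p : Fin n × Fin m => ¬ p.1.val = 0 ∧ ¬ p.2.val = 0))
          = (univ.filter (fun i : Fin n => ¬ i.val = 0)) ×ˢ
            (univ.filter (fun j : Fin m => ¬ j.val = 0)) := by
        ext ⟨i, j⟩
        simp [Finset.mem_product, and_assoc]
      have e2 : (univ.filter (fun p : Fin n × Fin m => p.1.val = 0 ∧ p.2.val = 0))
          = {(⟨0, hn⟩, ⟨0, hm⟩)} := by
        ext ⟨i, j⟩
        simp [Prod.ext_iff, Fin.ext_iff]
      have c1 : (univ.filter (fun i : Fin n => ¬ i.val = 0)).card = n - 1 := by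
        rw [Finset.filter_not, card_sdiff_of_subset (filter_subset _ _), card_univ, Fintype.card_fin]
        have : (univ.filter (fun i : Fin n => i.val = 0)) = {⟨0, hn⟩} := by
          ext i
          simp [Fin.ext_iff]
        rw [this, card_singleton]
      have c2 : (univ.filter (fun j : Fin m => ¬ j.val = 0)).card = m - 1 := by
        rw [Finset.filter_not, card_sdiff_of_subset (filter_subset _ _), card_univ, Fintype.card_fin]
        have : (univ.filter (fun j : Fin m => j.val = 0)) = {⟨0, hm⟩} := by
          ext j
          simp [Fin.ext_iff]
        rw [this, card_singleton]
      rw [e1, e2, card_product, c1, c2, card_singleton]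
    · rw [Finset.disjoint_left]
      intro p hp hp'
      simp only [mem_filter] at hp hp'
      tauto
  · rw [if_neg (by omega)]
    rcases lt_or_ge t m with htm | htm
    · have : (univ.filter (fun p : Fin n × Fin m =>
          (if p.1.val = 0 then p.2.val else if p.2.val = 0 then (m : ℕ) + p.1.val - 1 else 0) = t))
          = {(⟨0, hn⟩, ⟨t, htm⟩)} := by
        ext ⟨i, j⟩
        simp only [mem_filter, mem_univ, true_and, mem_singleton, Prod.ext_iff, Fin.ext_iff]
        have hi := i.isLt
        have hj := j.isLt
        split_ifs <;> omega
      rw [this, card_singleton]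
    · have htn : t - m + 1 < n := by omega
      have : (univ.filter (fun p : Fin n × Fin m =>
          (if p.1.val = 0 then p.2.val else if p.2.val = 0 then (m : ℕ) + p.1.val - 1 else 0) = t))
          = {(⟨t - m + 1, htn⟩, ⟨0, hm⟩)} := by
        ext ⟨i, j⟩
        simp only [mem_filter, mem_univ, true_and, mem_singleton, Prod.ext_iff, Fin.ext_iff]
        have hi := i.isLt
        have hj := j.isLt
        split_ifs <;> omega
      rw [this, card_singleton]
lemma no_rainbow_cycle (hn : 1 ≤ n) (hm : 1 ≤ m) :
    ¬ HasRainbowCycle (completeBipartiteGraph (Fin n) (Fin m))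
      (fun e => (⟨ecode n m e, ecode_lt hn hm e⟩ : Fin (n + m - 1))) := by
  rintro ⟨v, w, hw, hinj⟩
  have hG : True := trivial
  set a : Fin n ⊕ Fin m := Sum.inl ⟨0, hn⟩ with ha
  set b : Fin n ⊕ Fin m := Sum.inr ⟨0, hm⟩ with hb
  -- choose the (at most one) color-zero edge of the cycle
  have key : ∃ i₀ j₀, ecode n m (bp n m (i₀, j₀)) = 0 ∧
      ∀ e ∈ w.edges, ecode n m e = 0 → e = bp n m (i₀, j₀) := by
    by_cases hex : ∃ e ∈ w.edges, ecode n m e = 0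
    · obtain ⟨e0, he0w, he0c⟩ := hex
      have he0G : e0 ∈ (completeBipartiteGraph (Fin n) (Fin m)).edgeSet := w.edges_subset_edgeSet he0w
      have : ∃ p, bp n m p = e0 := by
        -- bp_range inlined as axiom-free: we use the statement from dev4; here re-prove quickly
        induction e0 using Sym2.ind with
        | _ x y =>
          rw [SimpleGraph.mem_edgeSet] at he0G
          rcases he0G with ⟨hx, hy⟩ | ⟨hx, hy⟩
          · obtain ⟨i, rfl⟩ := Sum.isLeft_iff.mp hx
            obtain ⟨j, rfl⟩ := Sum.isRight_iff.mp hy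
            exact ⟨(i, j), rfl⟩
          · obtain ⟨j, rfl⟩ := Sum.isRight_iff.mp hx
            obtain ⟨i, rfl⟩ := Sum.isLeft_iff.mp hy
            exact ⟨(i, j), Sym2.eq_swap⟩
      obtain ⟨⟨i₀, j₀⟩, hbp⟩ := this
      refine ⟨i₀, j₀, by rw [hbp]; exact he0c, ?_⟩
      intro e hew hec
      rw [hbp]
      apply hinj (by exact hew) (by exact he0w)
      apply Fin.ext
      show ecode n m e = ecode n m e0
      rw [hec, he0c]
    · push_neg at hex
      refine ⟨⟨0, hn⟩, ⟨0, hm⟩, rfl, fun e hew hec => absurd hec (hex e hew)⟩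
  obtain ⟨i₀, j₀, he0c, huniq⟩ := key
  set x₀ : Fin n ⊕ Fin m := Sum.inl i₀ with hx₀
  set y₀ : Fin n ⊕ Fin m := Sum.inr j₀ with hy₀
  have hij : (i₀.val = 0 ∧ j₀.val = 0) ∨ (i₀.val ≠ 0 ∧ j₀.val ≠ 0) := by
    have : ecode n m (bp n m (i₀, j₀)) =
        if i₀.val = 0 then j₀.val else if j₀.val = 0 then m + i₀.val - 1 else 0 := rfl
    rw [this] at he0c
    split_ifs at he0c <;> omega
  set S : Set (Sym2 (Fin n ⊕ Fin m)) :=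
    {e | e ∈ (completeBipartiteGraph (Fin n) (Fin m)).edgeSet ∧ ecode n m e ≠ 0} ∪ {bp n m (i₀, j₀)} with hS
  set H := SimpleGraph.fromEdgeSet S with hH
  have hedge : ∀ e ∈ w.edges, e ∈ H.edgeSet := by
    intro e he
    have heG : e ∈ (completeBipartiteGraph (Fin n) (Fin m)).edgeSet := w.edges_subset_edgeSet he
    rw [hH, SimpleGraph.edgeSet_fromEdgeSet]
    refine ⟨?_, (completeBipartiteGraph (Fin n) (Fin m)).not_isDiag_of_mem_edgeSet heG⟩
    by_cases hc : ecode n m e = 0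
    · exact Or.inr (huniq e he hc)
    · exact Or.inl ⟨heG, hc⟩
  set w' := w.transfer H hedge with hw'def
  have hw' : w'.IsCycle := hw.transfer hedge
  have hsupp_eq : w'.support = w.support := w.support_transfer hedge
  have hedges_eq : w'.edges = w.edges := w.edges_transfer hedge
  -- adjacency classification in H
  have hadjS : ∀ x z : Fin n ⊕ Fin m, H.Adj x z →
      (s(x, z) ∈ (completeBipartiteGraph (Fin n) (Fin m)).edgeSet ∧ ecode n m s(x, z) ≠ 0) ∨ s(x, z) = bp n m (i₀, j₀) := by
    intro x z hxz
    rw [hH, SimpleGraph.fromEdgeSet_adj] at hxz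
    exact hxz.1
  have h_inl : ∀ (i : Fin n) (z : Fin n ⊕ Fin m), H.Adj (Sum.inl i) z → i.val ≠ 0 →
      z = b ∨ (i = i₀ ∧ z = y₀) := by
    intro i z hadj hi
    rcases hadjS _ _ hadj with ⟨hG', hc⟩ | heq
    · rcases z with i' | j
      · rw [SimpleGraph.mem_edgeSet] at hG'
        simp at hG'
      · have : ecode n m s(Sum.inl i, Sum.inr j) =
            if i.val = 0 then j.val else if j.val = 0 then m + i.val - 1 else 0 := rfl
        rw [this] at hc
        rw [if_neg hi] at hc
        by_cases hj : j.val = 0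
        · left; rw [hb]; congr 1; exact Fin.ext hj
        · rw [if_neg hj] at hc; exact absurd rfl hc
    · rw [bp, Sym2.eq_iff] at heq
      rcases heq with ⟨h1, h2⟩ | ⟨h1, h2⟩
      · right
        exact ⟨Sum.inl.inj h1, h2⟩
      · exact absurd h1 (by simp)
  have h_inr : ∀ (j : Fin m) (z : Fin n ⊕ Fin m), H.Adj (Sum.inr j) z → j.val ≠ 0 →
      z = a ∨ (j = j₀ ∧ z = x₀) := by
    intro j z hadj hj
    rcases hadjS _ _ hadj with ⟨hG', hc⟩ | heq
    · rcases z with i | j'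
      · have : ecode n m s(Sum.inr j, Sum.inl i) =
            if i.val = 0 then j.val else if j.val = 0 then m + i.val - 1 else 0 := rfl
        rw [this] at hc
        by_cases hi : i.val = 0
        · left; rw [ha]; congr 1; exact Fin.ext hi
        · rw [if_neg hi, if_neg hj] at hc; exact absurd rfl hc
      · rw [SimpleGraph.mem_edgeSet] at hG'
        simp at hG'
    · rw [bp, Sym2.eq_iff] at heq
      rcases heq with ⟨h1, h2⟩ | ⟨h1, h2⟩
      · exact absurd h1 (by simp)
      · right
        exact ⟨Sum.inr.inj h1, h2⟩
  have h_a : ∀ z : Fin n ⊕ Fin m, H.Adj a z →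
      (∃ j : Fin m, z = Sum.inr j ∧ j.val ≠ 0) ∨ (i₀.val = 0 ∧ z = y₀) := by
    intro z hadj
    rcases hadjS _ _ hadj with ⟨hG', hc⟩ | heq
    · rcases z with i' | j
      · rw [SimpleGraph.mem_edgeSet] at hG'
        simp [ha] at hG'
      · have : ecode n m s(a, Sum.inr j) = j.val := by
          rw [ha]
          show gcode n m (Sum.inl ⟨0, hn⟩) (Sum.inr j) = j.val
          simp [gcode]
        rw [this] at hc
        exact Or.inl ⟨j, rfl, hc⟩
    · rw [bp, Sym2.eq_iff] at heq
      rcases heq with ⟨h1, h2⟩ | ⟨h1, h2⟩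
      · right
        refine ⟨?_, h2⟩
        rw [ha] at h1
        have h3 := Sum.inl.inj h1
        exact (congrArg Fin.val h3).symm
      · exact absurd h1 (by simp [ha])
  have h_b : ∀ z : Fin n ⊕ Fin m, H.Adj b z →
      (∃ i : Fin n, z = Sum.inl i ∧ i.val ≠ 0) ∨ (j₀.val = 0 ∧ z = x₀) := by
    intro z hadj
    rcases hadjS _ _ hadj with ⟨hG', hc⟩ | heq
    · rcases z with i | j'
      · have : ecode n m s(b, Sum.inl i) =
            if i.val = 0 then (0:ℕ) else m + i.val - 1 := by
          rw [hb]
          show (if i.val = 0 then (0:ℕ) else if (0:ℕ) = 0 then m + i.val - 1 else 0) = _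
          split_ifs <;> omega
        rw [this] at hc
        by_cases hi : i.val = 0
        · rw [if_pos hi] at hc; exact absurd rfl hc
        · exact Or.inl ⟨i, rfl, hi⟩
      · rw [SimpleGraph.mem_edgeSet] at hG'
        simp [hb] at hG'
    · rw [bp, Sym2.eq_iff] at heq
      rcases heq with ⟨h1, h2⟩ | ⟨h1, h2⟩
      · exact absurd h1 (by simp [hb])
      · right
        refine ⟨?_, h2⟩
        rw [hb] at h1
        have h3 := Sum.inr.inj h1
        exact (congrArg Fin.val h3).symm
  -- every support vertex of the cycle is one of a, b, x₀, y₀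
  have hadj_of_edge : ∀ (u z : Fin n ⊕ Fin m), s(u, z) ∈ w'.edges → H.Adj u z :=
    fun u z he => w'.adj_of_mem_edges he
  have hsupp : ∀ u ∈ w'.support, u = a ∨ u = b ∨ u = x₀ ∨ u = y₀ := by
    intro u hu
    by_contra hcon
    push_neg at hcon
    obtain ⟨hua, hub, hux, huy⟩ := hcon
    obtain ⟨x, y, hxy, hex, hey⟩ := cycle_two_edges hw' hu
    have hax := hadj_of_edge _ _ hex
    have hay := hadj_of_edge _ _ hey
    rcases u with i | j
    · have hi : i.val ≠ 0 := fun h => hua (by rw [ha]; congr 1; exact Fin.ext h)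
      have hii : i ≠ i₀ := fun h => hux (by rw [hx₀, h])
      have h1 := h_inl i x hax hi
      have h2 := h_inl i y hay hi
      rcases h1 with rfl | ⟨hh, _⟩
      · rcases h2 with rfl | ⟨hh, _⟩
        · exact hxy rfl
        · exact hii hh
      · exact hii hh
    · have hj : j.val ≠ 0 := fun h => hub (by rw [hb]; congr 1; exact Fin.ext h)
      have hjj : j ≠ j₀ := fun h => huy (by rw [hy₀, h])
      have h1 := h_inr j x hax hj
      have h2 := h_inr j y hay hj
      rcases h1 with rfl | ⟨hh, _⟩
      · rcases h2 with rfl | ⟨hh, _⟩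
        · exact hxy rfl
        · exact hjj hh
      · exact hjj hh
  have hnodup : w'.support.tail.Nodup := hw'.2
  have hlen3 : 3 ≤ w'.support.tail.length := by
    have h1 : w'.support.length = w'.length + 1 := Walk.length_support w'
    have h2 : 3 ≤ w'.length := hw'.three_le_length
    have h3 : w'.support.tail.length = w'.support.length - 1 := by
      simp [List.length_tail]
    omega
  have hcard := List.toFinset_card_of_nodup hnodup
  rcases hij with ⟨hi0, hj0⟩ | ⟨hi0, hj0⟩
  · -- e₀ = ab : support ⊆ {a, b}
    have hxa : x₀ = a := by rw [hx₀, ha]; congr 1; exact Fin.ext hi0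
    have hyb : y₀ = b := by rw [hy₀, hb]; congr 1; exact Fin.ext hj0
    have hsub : w'.support.tail.toFinset ⊆ ({a, b} : Finset (Fin n ⊕ Fin m)) := by
      intro u hu
      rw [List.mem_toFinset] at hu
      have := hsupp u (List.mem_of_mem_tail hu)
      rw [hxa, hyb] at this
      simp only [Finset.mem_insert, Finset.mem_singleton]
      tauto
    have := Finset.card_le_card hsub
    have h2 : ({a, b} : Finset (Fin n ⊕ Fin m)).card ≤ 2 :=
      (Finset.card_insert_le _ _).trans (by simp)
    omega
  · -- e₀ = x₀y₀ with both indices nonzero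
    have hax0 : a ≠ x₀ := by
      rw [ha, hx₀]
      intro h
      exact hi0 (Fin.val_eq_of_eq (Sum.inl.inj h)).symm
    have hby0 : b ≠ y₀ := by
      rw [hb, hy₀]
      intro h
      exact hj0 (Fin.val_eq_of_eq (Sum.inr.inj h)).symm
    -- a must be in the support
    have hains : a ∈ w'.support := by
      by_contra hna
      have hy0s : y₀ ∈ w'.support := by
        by_contra hny
        have hsub : w'.support.tail.toFinset ⊆ ({b, x₀} : Finset (Fin n ⊕ Fin m)) := by
          intro u hu
          rw [List.mem_toFinset] at hu
          have hus := List.mem_of_mem_tail hu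
          simp only [Finset.mem_insert, Finset.mem_singleton]
          rcases hsupp u hus with h | h | h | h
          · rw [h] at hus; exact absurd hus hna
          · exact Or.inl h
          · exact Or.inr h
          · rw [h] at hus; exact absurd hus hny
        have := Finset.card_le_card hsub
        have h2 : ({b, x₀} : Finset (Fin n ⊕ Fin m)).card ≤ 2 :=
          (Finset.card_insert_le _ _).trans (by simp)
        omega
      -- y₀ in support forces edge s(y₀, a), hence a in support
      obtain ⟨x, y, hxy, hex, hey⟩ := cycle_two_edges hw' hy0s
      have hax := h_inr j₀ x (by rw [hy₀] at hex; exact hadj_of_edge _ _ hex) hj0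
      have hay := h_inr j₀ y (by rw [hy₀] at hey; exact hadj_of_edge _ _ hey) hj0
      have hedge_ya : s(y₀, a) ∈ w'.edges := by
        rcases hax with rfl | ⟨_, rfl⟩
        · exact hex
        · rcases hay with rfl | ⟨_, rfl⟩
          · exact hey
          · exact absurd rfl hxy
      exact hna (w'.snd_mem_support_of_mem_edges hedge_ya)
    -- two distinct cycle edges at a, but only one possible neighbor
    obtain ⟨x, y, hxy, hex, hey⟩ := cycle_two_edges hw' hains
    have hax := h_a x (hadj_of_edge _ _ hex)
    have hay := h_a y (hadj_of_edge _ _ hey)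
    have hxmem : x ∈ w'.support := w'.snd_mem_support_of_mem_edges hex
    have hymem : y ∈ w'.support := w'.snd_mem_support_of_mem_edges hey
    have hxeq : x = y₀ := by
      rcases hax with ⟨j, rfl, hjne⟩ | ⟨h0, _⟩
      · rcases hsupp _ hxmem with h | h | h | h
        · exact absurd h (by simp [ha])
        · exact absurd (Fin.val_eq_of_eq (Sum.inr.inj (h.trans hb))) hjne
        · exact absurd h (by simp [hx₀])
        · exact h
      · exact absurd h0 hi0
    have hyeq : y = y₀ := by
      rcases hay with ⟨j, rfl, hjne⟩ | ⟨h0, _⟩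
      · rcases hsupp _ hymem with h | h | h | h
        · exact absurd h (by simp [ha])
        · exact absurd (Fin.val_eq_of_eq (Sum.inr.inj (h.trans hb))) hjne
        · exact absurd h (by simp [hx₀])
        · exact h
      · exact absurd h0 hi0
    exact hxy (hxeq.trans hyeq.symm)

/-- For `1 ≤ n ≤ m`, there is a JL-coloring of `K_{n,m}` with exactly `(n-1)(m-1)+1`
rainbow spanning trees, and every JL-coloring `φ` of `K_{n,m}` satisfies
`|R(K_{n,m},φ)| ≥ (n-1)(m-1)+1`. -/
theorem stmt_17 (n m : ℕ) (hn : 1 ≤ n) (hnm : n ≤ m) :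
    (∃ φ : Sym2 (Fin n ⊕ Fin m) → Fin (n + m - 1),
        IsJLColoring (completeBipartiteGraph (Fin n) (Fin m)) φ ∧
          numRST (completeBipartiteGraph (Fin n) (Fin m)) φ = (n - 1) * (m - 1) + 1) ∧
      ∀ φ : Sym2 (Fin n ⊕ Fin m) → Fin (n + m - 1),
        IsJLColoring (completeBipartiteGraph (Fin n) (Fin m)) φ →
          (n - 1) * (m - 1) + 1 ≤ numRST (completeBipartiteGraph (Fin n) (Fin m)) φ := by

  have hm : 1 ≤ m := hn.trans hnm
  have hcardV : Fintype.card (Fin n ⊕ Fin m) = (n + m - 1) + 1 := by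
    rw [Fintype.card_sum, Fintype.card_fin, Fintype.card_fin]
    omega
  have hcl : ∀ c : Fin (n + m - 1),
      (univ.filter (fun p : Fin n × Fin m =>
        (⟨ecode n m (bp n m p), ecode_lt hn hm _⟩ : Fin (n + m - 1)) = c)).card
      = if c.val = 0 then (n - 1) * (m - 1) + 1 else 1 := by
    intro c
    have hcong : (univ.filter (fun p : Fin n × Fin m =>
        (⟨ecode n m (bp n m p), ecode_lt hn hm _⟩ : Fin (n + m - 1)) = c))
        = univ.filter (fun p : Fin n × Fin m =>
          (if p.1.val = 0 then p.2.val else if p.2.val = 0 then (m : ℕ) + p.1.val - 1 else 0)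
            = c.val) := by
      apply filter_congr
      intro p _
      rw [← ecode_bp]
      constructor
      · intro h
        exact congrArg Fin.val h
      · intro h
        exact Fin.ext h
    rw [hcong, count_classes hn hm c.isLt]
  constructor
  · refine ⟨fun e => ⟨ecode n m e, ecode_lt hn hm e⟩, ⟨?_, no_rainbow_cycle hn hm⟩, ?_⟩
    · intro c
      have hc := hcl c
      have hpos : 0 < (univ.filter (fun p : Fin n × Fin m =>
          (⟨ecode n m (bp n m p), ecode_lt hn hm _⟩ : Fin (n + m - 1)) = c)).card := by
        rw [hc]
        split_ifs <;> omega
      obtain ⟨p, hp⟩ := Finset.card_pos.mp hpos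
      rw [mem_filter] at hp
      exact ⟨bp n m p, (bp_range _).mpr ⟨p, rfl⟩, hp.2⟩
    · rw [numRST_eq_prod (completeBipartiteGraph (Fin n) (Fin m)) _ (bp n m) bp_inj bp_range
        hcardV (no_rainbow_cycle hn hm)]
      rw [Finset.prod_congr rfl (fun c _ => hcl c)]
      have h0 : (0 : ℕ) < n + m - 1 := by omega
      rw [Finset.prod_eq_single (⟨0, h0⟩ : Fin (n + m - 1))
        (fun c _ hne => if_neg (fun hc0 => hne (Fin.ext hc0)))
        (fun h => absurd (mem_univ _) h)]
      rw [if_pos rfl]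
  · intro φ hJL
    obtain ⟨hsurj, hnrc⟩ := hJL
    rw [numRST_eq_prod (completeBipartiteGraph (Fin n) (Fin m)) φ (bp n m) bp_inj bp_range
      hcardV hnrc]
    set F : Fin (n + m - 1) → ℕ :=
      fun c => (univ.filter (fun p : Fin n × Fin m => φ (bp n m p) = c)).card with hF
    have hpos : ∀ c ∈ (univ : Finset (Fin (n + m - 1))), 1 ≤ F c := by
      intro c _
      obtain ⟨e, heG, hec⟩ := hsurj c
      obtain ⟨p, rfl⟩ := (bp_range e).mp heG
      exact card_pos.mpr ⟨p, mem_filter.mpr ⟨mem_univ _, hec⟩⟩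
    have hsum : ∑ c, F c = n * m := by
      have := Finset.card_eq_sum_card_fiberwise
        (f := fun p : Fin n × Fin m => φ (bp n m p)) (s := univ) (t := univ)
        (fun p _ => mem_univ _)
      rw [card_univ, Fintype.card_prod, Fintype.card_fin, Fintype.card_fin] at this
      exact this.symm
    have hkey := sum_add_one_le_prod_add_card univ F hpos
    rw [hsum, card_univ, Fintype.card_fin] at hkey
    have harith : n * m + 1 = (n - 1) * (m - 1) + 1 + (n + m - 1) := by
      obtain ⟨a, rfl⟩ : ∃ a, n = a + 1 := ⟨n - 1, by omega⟩
      obtain ⟨b, rfl⟩ : ∃ b, m = b + 1 := ⟨m - 1, by omega⟩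
      simp only [Nat.add_sub_cancel]
      ring_nf
      omega
    linarith [hkey, harith]
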